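/- For every real number n, define f(x) := exp( (n − x)·( log x − log(x + 1) ) ) · (x + 1) · e^{−1} for real x > 0. Then lim_{x → +∞} x · ( f(x) − x − (1/2 − n) ) = n²/2 − 1/24. -/

import Mathlib

open Filter Real

private lemma stmt17_aux_w : Filter.Tendsto (fun u : ℝ => (Real.log (1+u) - u + u^2/2)/u^3)
    (nhdsWithin 0 (Set.Ioi 0)) (nhds (1/3)) := by
  have hbound : ∀ u : ℝ, u ∈ Set.Ioo (0:ℝ) (1/2) →
      |(Real.log (1+u) - u + u^2/2)/u^3 - 1/3| ≤ 2*u := by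
    intro u hu
    obtain ⟨hu0, hu2⟩ := hu
    have h1 : |(-u : ℝ)| < 1 := by rw [abs_neg, abs_of_pos hu0]; linarith
    have h := Real.abs_log_sub_add_sum_range_le h1 3
    simp only [Finset.sum_range_succ, Finset.sum_range_zero] at h
    norm_num at h
    have hsum : -u + u^2/2 + (-u)^3/3 + Real.log (1+u) = Real.log (1+u) - u + u^2/2 - u^3/3 := by ring
    rw [hsum] at h
    have hu3 : (0:ℝ) < u^3 := by positivity
    have heq : (Real.log (1+u) - u + u^2/2)/u^3 - 1/3
        = (Real.log (1+u) - u + u^2/2 - u^3/3)/u^3 := by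
      have h3 : u^3 ≠ 0 := ne_of_gt hu3
      field_simp
    rw [heq, abs_div, abs_of_pos hu3, div_le_iff₀ hu3]
    have h2 : |u|^4/(1 - |u|) ≤ u^4 / (1/2) := by
      rw [abs_of_pos hu0]
      gcongr
      linarith
    calc |Real.log (1+u) - u + u^2/2 - u^3/3| ≤ u^4/(1/2) := h.trans h2
      _ = 2*u*u^3 := by ring
  have h1 : Filter.Tendsto (fun u : ℝ => (1:ℝ)/3 - 2*u) (nhdsWithin 0 (Set.Ioi 0)) (nhds (1/3)) := by
    have h : Filter.Tendsto (fun u : ℝ => (1:ℝ)/3 - 2*u) (nhds 0) (nhds (1/3 - 2*0)) :=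
      Continuous.tendsto (by continuity) 0
    norm_num at h
    exact h.mono_left nhdsWithin_le_nhds
  have h2 : Filter.Tendsto (fun u : ℝ => (1:ℝ)/3 + 2*u) (nhdsWithin 0 (Set.Ioi 0)) (nhds (1/3)) := by
    have h : Filter.Tendsto (fun u : ℝ => (1:ℝ)/3 + 2*u) (nhds 0) (nhds (1/3 + 2*0)) :=
      Continuous.tendsto (by continuity) 0
    norm_num at h
    exact h.mono_left nhdsWithin_le_nhds
  have hev : ∀ᶠ u in nhdsWithin (0:ℝ) (Set.Ioi 0), u ∈ Set.Ioo (0:ℝ) (1/2) :=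
    Ioo_mem_nhdsGT_of_mem (by norm_num)
  refine tendsto_of_tendsto_of_tendsto_of_le_of_le' h1 h2 ?_ ?_
  · filter_upwards [hev] with u hu
    have := abs_le.mp (hbound u hu)
    linarith [this.1]
  · filter_upwards [hev] with u hu
    have := abs_le.mp (hbound u hu)
    linarith [this.2]

private lemma stmt17_key (n : ℝ) :
    Filter.Tendsto (fun u : ℝ =>
      (Real.exp ((1/u - n) * Real.log (1+u) - 1) * (1+u) - 1 - (1/2 - n)*u)/u^2)
      (nhdsWithin 0 (Set.Ioi 0)) (nhds (n^2/2 - 1/24)) := by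
  set l := nhdsWithin (0:ℝ) (Set.Ioi 0) with hl
  set w : ℝ → ℝ := fun u => (Real.log (1+u) - u + u^2/2)/u^3 with hw_def
  set ρ : ℝ → ℝ := fun u => (-(1/2) - n) + u*(w u + n/2) - n*u^2*(w u) with hρ_def
  set r : ℝ → ℝ := fun u => u * ρ u with hr_def
  -- basic tendsto facts
  have hu : Filter.Tendsto (fun u : ℝ => u) l (nhds 0) :=
    tendsto_id.mono_left nhdsWithin_le_nhds
  have hw : Filter.Tendsto w l (nhds (1/3)) := stmt17_aux_w
  have hρ : Filter.Tendsto ρ l (nhds (-(1/2) - n)) := by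
    have : Filter.Tendsto ρ l (nhds ((-(1/2) - n) + 0*((1/3) + n/2) - n*(0^2)*(1/3))) := by
      apply Filter.Tendsto.sub
      · exact tendsto_const_nhds.add (hu.mul (hw.add tendsto_const_nhds))
      · exact (tendsto_const_nhds.mul (hu.pow 2)).mul hw
    simpa using this
  have hr : Filter.Tendsto r l (nhds 0) := by
    have := hu.mul hρ
    simpa using this
  -- the exponent identity
  have r_eq : ∀ u : ℝ, 0 < u → (1/u - n) * Real.log (1+u) - 1 = r u := by
    intro u hu0
    have hne : u ≠ 0 := ne_of_gt hu0
    simp only [hr_def, hρ_def, hw_def]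
    field_simp
    ring
  -- the B part
  set B : ℝ → ℝ := fun u => (w u + n/2) - n*u*(w u) + (ρ u)^2/2 + ρ u + u*((ρ u)^2/2) with hB_def
  have hB : Filter.Tendsto B l (nhds (n^2/2 - 1/24)) := by
    have hv : Filter.Tendsto B l (nhds (((1/3) + n/2) - n*0*(1/3) + (-(1/2) - n)^2/2
        + (-(1/2) - n) + 0*((-(1/2) - n)^2/2))) := by
      refine ((((hw.add tendsto_const_nhds).sub
        ((tendsto_const_nhds.mul hu).mul hw)).add ((hρ.pow 2).div_const 2)).add hρ).add
        (hu.mul ((hρ.pow 2).div_const 2))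
    have : ((1:ℝ)/3 + n/2) - n*0*(1/3) + (-(1/2) - n)^2/2 + (-(1/2) - n) + 0*((-(1/2) - n)^2/2)
        = n^2/2 - 1/24 := by ring
    rwa [this] at hv
  -- the A part tends to zero
  set A : ℝ → ℝ := fun u => (1+u) * (Real.exp (r u) - (1 + r u + (r u)^2/2)) / u^2 with hA_def
  have hA : Filter.Tendsto A l (nhds 0) := by
    set C : ℝ := |(-(1/2) - n)| + 1 with hC_def
    have hC0 : 0 < C := by positivity
    have hr1 : ∀ᶠ u in l, |r u| ≤ 1 := by
      have h : ∀ᶠ v in nhds (0:ℝ), |v| ≤ 1 := by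
        filter_upwards [Metric.ball_mem_nhds (0:ℝ) one_pos] with v hv
        rw [Metric.mem_ball, Real.dist_eq, sub_zero] at hv
        exact le_of_lt hv
      exact hr.eventually h
    have hρC : ∀ᶠ u in l, |ρ u| ≤ C := by
      have h : ∀ᶠ v in nhds (-(1/2) - n : ℝ), |v| ≤ C := by
        filter_upwards [Metric.ball_mem_nhds (-(1/2) - n : ℝ) one_pos] with v hv
        rw [Metric.mem_ball, Real.dist_eq] at hv
        have : |v| ≤ |v - (-(1/2) - n)| + |(-(1/2) - n)| := by
          calc |v| = |(v - (-(1/2) - n)) + (-(1/2) - n)| := by ring_nf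
            _ ≤ _ := abs_add_le _ _
        rw [hC_def]; linarith
      exact hρ.eventually h
    have hIoo : ∀ᶠ u in l, u ∈ Set.Ioo (0:ℝ) 1 := Ioo_mem_nhdsGT_of_mem (by norm_num)
    have habs : ∀ᶠ u in l, |A u| ≤ (4/9) * C^3 * u := by
      filter_upwards [hr1, hρC, hIoo] with u h1 h2 h3
      obtain ⟨hu0, hu1⟩ := h3
      have hexp := Real.exp_bound h1 (by norm_num : 0 < 3)
      have hsum3 : ∑ m ∈ Finset.range 3, (r u)^m / (Nat.factorial m) = 1 + r u + (r u)^2/2 := by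
        simp [Finset.sum_range_succ, Nat.factorial]
      rw [hsum3] at hexp
      have hconst : ((Nat.succ 3 : ℕ) : ℝ) / ((Nat.factorial 3 : ℕ) * (3:ℕ)) = 2/9 := by
        norm_num [Nat.factorial]
      rw [hconst] at hexp
      have hrc : |r u|^3 ≤ u^3 * C^3 := by
        have : |r u| = u * |ρ u| := by
          rw [hr_def]; simp [abs_mul, abs_of_pos hu0]
        rw [this, mul_pow]
        gcongr
      have hu2 : (0:ℝ) < u^2 := by positivity
      rw [hA_def]
      have : |(1+u) * (Real.exp (r u) - (1 + r u + (r u)^2/2)) / u^2|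
          = |1+u| * |Real.exp (r u) - (1 + r u + (r u)^2/2)| / u^2 := by
        rw [abs_div, abs_mul, abs_of_pos hu2]
      rw [this]
      have h1u : |1+u| ≤ 2 := by rw [abs_of_pos (by linarith)]; linarith
      calc |1+u| * |Real.exp (r u) - (1 + r u + (r u)^2/2)| / u^2
          ≤ 2 * (u^3 * C^3 * (2/9)) / u^2 := by
            gcongr
            refine hexp.trans ?_
            gcongr
        _ = (4/9) * C^3 * u := by
            have hne : u ≠ 0 := ne_of_gt hu0
            field_simp
            ring
    apply (tendsto_zero_iff_abs_tendsto_zero A).mpr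
    apply squeeze_zero' (Filter.Eventually.of_forall fun u => abs_nonneg _) habs
    have : Filter.Tendsto (fun u : ℝ => (4/9) * C^3 * u) (nhds 0) (nhds ((4/9) * C^3 * 0)) :=
      Continuous.tendsto (by continuity) 0
    norm_num at this
    exact this.mono_left nhdsWithin_le_nhds
  -- combine
  have hcomb := hA.add hB
  rw [zero_add] at hcomb
  apply hcomb.congr'
  filter_upwards [self_mem_nhdsWithin] with u hu0
  rw [Set.mem_Ioi] at hu0
  have hne : u ≠ 0 := ne_of_gt hu0
  rw [r_eq u hu0, hA_def, hB_def]
  simp only [hρ_def, hr_def]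
  set E := Real.exp (u * ((-(1/2) - n) + u*(w u + n/2) - n*u^2*(w u))) with hE
  field_simp
  ring


/-- Large-`x` expansion of the recursion operator symbol
`f(x) = (x/(x+1))^{n−x}(x+1)e^{−1} = x + 1/2 − n + (n²/2 − 1/24)/x + O(x^{−2})`. -/
theorem stmt17 (n : ℝ)
    (f : ℝ → ℝ)
    (hf : ∀ x : ℝ, 0 < x → f x =
      Real.exp ((n - x) * (Real.log x - Real.log (x + 1))) * (x + 1) * Real.exp (-1)) :
    Filter.Tendsto (fun x : ℝ => x * (f x - x - (1/2 - n))) Filter.atTop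
      (nhds (n ^ 2 / 2 - 1/24)) := by
  have key := stmt17_key n
  have hinv : Filter.Tendsto (fun x : ℝ => x⁻¹) Filter.atTop (nhdsWithin 0 (Set.Ioi 0)) :=
    tendsto_inv_atTop_nhdsGT_zero
  have hc := key.comp hinv
  have hval : n^2/2 - 1/24 = n ^ 2 / 2 - 1/24 := rfl
  apply hc.congr'
  filter_upwards [eventually_gt_atTop (0:ℝ)] with x hx
  have hx0 : x ≠ 0 := ne_of_gt hx
  have hx1 : (0:ℝ) < x + 1 := by linarith
  have hlog : Real.log (1 + x⁻¹) = Real.log (x+1) - Real.log x := by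
    rw [show (1:ℝ) + x⁻¹ = (x+1)/x by field_simp]
    exact Real.log_div (ne_of_gt hx1) hx0
  have harg : (1/x⁻¹ - n) * Real.log (1+x⁻¹) - 1
      = (n - x)*(Real.log x - Real.log (x+1)) + (-1) := by
    rw [hlog, one_div, inv_inv]; ring
  simp only [Function.comp_apply]
  rw [harg, Real.exp_add, hf x hx]
  set E := Real.exp ((n - x) * (Real.log x - Real.log (x + 1))) with hE
  set D := Real.exp (-1 : ℝ) with hD
  field_simp
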